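/- On the quantum Koszul complex K (with product twisted by the braiding), the Koszul differential κ satisfies the q-Leibniz rule: for a ∈ K^i of polynomial degree d₁ and b ∈ K^j of polynomial degree d₂, κ(ab) = q^j κ(a)·b + (−q⁻¹)^{d₁−i} a·κ(b). -/

import Mathlib

/-- Generators of the algebra `Ω(n) = S_q(V_n) ⊗ Λ_q(V_n)`: `Sum.inl i` stands for
`x_i = e_i ⊗ 1` (symmetric generator) and `Sum.inr i` for `y_i = 1 ⊗ e_i` (exterior
generator). -/
abbrev OmegaLetter (n : ℕ) := Fin n ⊕ Fin n

/-- The defining relations of the algebra `Ω(n) = S_q(V_n) ⊗ Λ_q(V_n)` with product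
twisted by the braiding (quantum de Rham algebra). -/
inductive omegaRel (K : Type*) [Field K] (q : K) (n : ℕ) :
    FreeAlgebra K (OmegaLetter n) → FreeAlgebra K (OmegaLetter n) → Prop
  | xx {i j : Fin n} (h : j < i) :
      omegaRel K q n (FreeAlgebra.ι K (Sum.inl i) * FreeAlgebra.ι K (Sum.inl j))
        (q • (FreeAlgebra.ι K (Sum.inl j) * FreeAlgebra.ι K (Sum.inl i)))
  | yx_gt {i j : Fin n} (h : j < i) :
      omegaRel K q n (FreeAlgebra.ι K (Sum.inr j) * FreeAlgebra.ι K (Sum.inl i))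
        (FreeAlgebra.ι K (Sum.inl i) * FreeAlgebra.ι K (Sum.inr j))
  | yx_eq (i : Fin n) :
      omegaRel K q n (FreeAlgebra.ι K (Sum.inr i) * FreeAlgebra.ι K (Sum.inl i))
        (q • (FreeAlgebra.ι K (Sum.inl i) * FreeAlgebra.ι K (Sum.inr i)))
  | yx_lt {i j : Fin n} (h : i < j) :
      omegaRel K q n (FreeAlgebra.ι K (Sum.inr j) * FreeAlgebra.ι K (Sum.inl i))
        ((q - q⁻¹) • (FreeAlgebra.ι K (Sum.inl j) * FreeAlgebra.ι K (Sum.inr i)) +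
          FreeAlgebra.ι K (Sum.inl i) * FreeAlgebra.ι K (Sum.inr j))
  | yy {i j : Fin n} (h : j < i) :
      omegaRel K q n (FreeAlgebra.ι K (Sum.inr i) * FreeAlgebra.ι K (Sum.inr j))
        ((-q⁻¹) • (FreeAlgebra.ι K (Sum.inr j) * FreeAlgebra.ι K (Sum.inr i)))
  | ysq (i : Fin n) :
      omegaRel K q n (FreeAlgebra.ι K (Sum.inr i) * FreeAlgebra.ι K (Sum.inr i)) 0

/-- The algebra `Ω(n) = S_q(V_n) ⊗ Λ_q(V_n)` with braided product, presented by
generators and relations. -/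
abbrev OmegaAlg (K : Type*) [Field K] (q : K) (n : ℕ) := RingQuot (omegaRel K q n)

namespace OmegaAlg

variable (K : Type*) [Field K] (q : K) (n : ℕ)

/-- The generators of `Ω(n)`. -/
noncomputable def gen (g : OmegaLetter n) : OmegaAlg K q n :=
  RingQuot.mkAlgHom K (omegaRel K q n) (FreeAlgebra.ι K g)

/-- The symmetric generator `x_i = e_i ⊗ 1`. -/
noncomputable def X (i : Fin n) : OmegaAlg K q n := gen K q n (Sum.inl i)

/-- The exterior generator `y_i = 1 ⊗ e_i`. -/
noncomputable def Y (i : Fin n) : OmegaAlg K q n := gen K q n (Sum.inr i)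

/-- The image in `Ω(n)` of a word in the generators. -/
noncomputable def wordProd (w : List (OmegaLetter n)) : OmegaAlg K q n :=
  (w.map (gen K q n)).prod

/-- The number of symmetric letters `x` in a word. -/
def countX (w : List (OmegaLetter n)) : ℕ := (w.filter Sum.isLeft).length

/-- The number of exterior letters `y` in a word. -/
def countY (w : List (OmegaLetter n)) : ℕ := (w.filter Sum.isRight).length

/-- The bigraded piece `Ω^i_d(n) = S_q^{d-i}(n) ⊗ Λ_q^i(n)`: the span of the words with
`d` letters, `i` of which are exterior. -/
noncomputable def piece (i d : ℕ) : Submodule K (OmegaAlg K q n) :=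
  Submodule.span K {a : OmegaAlg K q n | ∃ w : List (OmegaLetter n),
    w.length = d ∧ countY n w = i ∧ a = wordProd K q n w}

/-- The property that `δ` is the quantum de Rham differential: on the word monomials of
`Ω(n)` it deconcatenates one symmetric letter (with the appropriate braiding twist) and
multiplies it into the exterior factor, replacing one `x`-letter by the corresponding
`y`-letter. -/
def IsDeRham (δ : OmegaAlg K q n →ₗ[K] OmegaAlg K q n) : Prop :=
  ∀ w : List (OmegaLetter n),
    δ (wordProd K q n w) =
      ∑ k : Fin w.length,
        Sum.elim
          (fun i : Fin n =>
            ((-q⁻¹) ^ countY n (w.take k) * q ^ countX n (w.drop (k + 1))) •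
              wordProd K q n (w.set k (Sum.inr i)))
          (fun _ : Fin n => (0 : OmegaAlg K q n))
          (w.get k)

/-- The property that `κ` is the quantum Koszul differential: on the word monomials of
`Ω(n)` it deconcatenates one exterior letter (with the appropriate braiding twist) and
multiplies it into the symmetric factor, replacing one `y`-letter by the corresponding
`x`-letter. -/
def IsKoszul (κ : OmegaAlg K q n →ₗ[K] OmegaAlg K q n) : Prop :=
  ∀ w : List (OmegaLetter n),
    κ (wordProd K q n w) =
      ∑ k : Fin w.length,
        Sum.elim
          (fun _ : Fin n => (0 : OmegaAlg K q n))
          (fun i : Fin n =>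
            ((-q⁻¹) ^ countY n (w.take k) * q ^ countX n (w.drop (k + 1))) •
              wordProd K q n (w.set k (Sum.inl i)))
          (w.get k)

end OmegaAlg

/-- The bigraded piece `K^i_d(n) = S_q^i(n) ⊗ Λ_q^{d-i}(n)` of the Koszul complex: the
span of the words with `d` letters, `i` of which are symmetric. -/
noncomputable def OmegaAlg.koszulPiece (K : Type*) [Field K] (q : K) (n : ℕ)
    (i d : ℕ) : Submodule K (OmegaAlg K q n) :=
  Submodule.span K {a : OmegaAlg K q n | ∃ w : List (OmegaLetter n),
    w.length = d ∧ OmegaAlg.countX n w = i ∧ a = OmegaAlg.wordProd K q n w}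


namespace OmegaAlg

variable {K : Type*} [Field K] {q : K} {n : ℕ}

lemma wordProd_nil : wordProd K q n [] = 1 := rfl

lemma wordProd_cons (g : OmegaLetter n) (w : List (OmegaLetter n)) :
    wordProd K q n (g :: w) = gen K q n g * wordProd K q n w := by
  simp [wordProd]

lemma wordProd_append (w₁ w₂ : List (OmegaLetter n)) :
    wordProd K q n (w₁ ++ w₂) = wordProd K q n w₁ * wordProd K q n w₂ := by
  simp [wordProd]

lemma countY_cons_inl (i : Fin n) (w : List (OmegaLetter n)) :
    countY n (Sum.inl i :: w) = countY n w := by simp [countY]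

lemma countY_cons_inr (i : Fin n) (w : List (OmegaLetter n)) :
    countY n (Sum.inr i :: w) = countY n w + 1 := by simp [countY, List.filter_cons]

lemma countX_cons_inl (i : Fin n) (w : List (OmegaLetter n)) :
    countX n (Sum.inl i :: w) = countX n w + 1 := by simp [countX, List.filter_cons]

lemma countX_cons_inr (i : Fin n) (w : List (OmegaLetter n)) :
    countX n (Sum.inr i :: w) = countX n w := by simp [countX]

lemma countX_append (w₁ w₂ : List (OmegaLetter n)) :
    countX n (w₁ ++ w₂) = countX n w₁ + countX n w₂ := by simp [countX]

lemma countX_add_countY (w : List (OmegaLetter n)) :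
    countX n w + countY n w = w.length := by
  induction w with
  | nil => rfl
  | cons g t ih =>
    cases g with
    | inl i => rw [countX_cons_inl, countY_cons_inl, List.length_cons, ← ih]; ring
    | inr i => rw [countX_cons_inr, countY_cons_inr, List.length_cons, ← ih]; ring

lemma koszul_one (κ : OmegaAlg K q n →ₗ[K] OmegaAlg K q n)
    (hκ : IsKoszul K q n κ) : κ 1 = 0 := by
  have h := hκ []
  simpa [wordProd_nil] using h

lemma koszul_cons_inl (κ : OmegaAlg K q n →ₗ[K] OmegaAlg K q n)
    (hκ : IsKoszul K q n κ) (j : Fin n) (w : List (OmegaLetter n)) :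
    κ (wordProd K q n (Sum.inl j :: w)) =
      gen K q n (Sum.inl j) * κ (wordProd K q n w) := by
  rw [hκ (Sum.inl j :: w), hκ w]
  rw [show (∑ k : Fin (Sum.inl j :: w).length,
      Sum.elim (fun _ => (0 : OmegaAlg K q n))
        (fun i =>
          ((-q⁻¹) ^ countY n (List.take (↑k) (Sum.inl j :: w)) *
            q ^ countX n (List.drop (↑k + 1) (Sum.inl j :: w))) •
            wordProd K q n ((Sum.inl j :: w).set (↑k) (Sum.inl i)))
        ((Sum.inl j :: w).get k)) = _ from Fin.sum_univ_succ _]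
  simp only [List.get_cons_zero, List.get_cons_succ, Fin.val_succ, Fin.val_zero,
    List.take_succ_cons, List.drop_succ_cons, List.set_cons_succ, Sum.elim_inl,
    countY_cons_inl, wordProd_cons, Finset.mul_sum]
  rw [zero_add]
  refine Finset.sum_congr rfl fun k _ => ?_
  rcases h : w.get k with i | i <;> rw [List.get_eq_getElem] at h <;> simp [h]

lemma koszul_cons_inr (κ : OmegaAlg K q n →ₗ[K] OmegaAlg K q n)
    (hκ : IsKoszul K q n κ) (j : Fin n) (w : List (OmegaLetter n)) :
    κ (wordProd K q n (Sum.inr j :: w)) =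
      q ^ countX n w • (gen K q n (Sum.inl j) * wordProd K q n w) +
        (-q⁻¹) • (gen K q n (Sum.inr j) * κ (wordProd K q n w)) := by
  rw [hκ (Sum.inr j :: w), hκ w]
  rw [show (∑ k : Fin (Sum.inr j :: w).length,
      Sum.elim (fun _ => (0 : OmegaAlg K q n))
        (fun i =>
          ((-q⁻¹) ^ countY n (List.take (↑k) (Sum.inr j :: w)) *
            q ^ countX n (List.drop (↑k + 1) (Sum.inr j :: w))) •
            wordProd K q n ((Sum.inr j :: w).set (↑k) (Sum.inl i)))
        ((Sum.inr j :: w).get k)) = _ from Fin.sum_univ_succ _]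
  simp only [List.get_cons_zero, List.get_cons_succ, Fin.val_succ, Fin.val_zero,
    List.take_succ_cons, List.drop_succ_cons, List.set_cons_succ, List.set_cons_zero,
    Sum.elim_inr, countY_cons_inr, wordProd_cons, List.take_zero, List.drop_zero,
    Finset.smul_sum, Finset.mul_sum]
  congr 1
  · simp [countY]
  · refine Finset.sum_congr rfl fun k _ => ?_
    rcases h : w.get k with i | i <;> rw [List.get_eq_getElem] at h
    · simp [h]
    · simp only [List.get_eq_getElem, Fin.val_succ, List.getElem_cons_succ, h, Sum.elim_inr]
      rw [mul_smul_comm, smul_smul]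
      congr 1
      ring


lemma koszul_word_mul (κ : OmegaAlg K q n →ₗ[K] OmegaAlg K q n)
    (hκ : IsKoszul K q n κ) (w₁ w₂ : List (OmegaLetter n)) :
    κ (wordProd K q n (w₁ ++ w₂)) =
      q ^ countX n w₂ • (κ (wordProd K q n w₁) * wordProd K q n w₂) +
        (-q⁻¹) ^ countY n w₁ • (wordProd K q n w₁ * κ (wordProd K q n w₂)) := by
  induction w₁ with
  | nil => simp [wordProd_nil, koszul_one κ hκ, countY]
  | cons g t ih =>
    cases g with
    | inl i =>
      rw [List.cons_append, koszul_cons_inl κ hκ i (t ++ w₂), ih,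
        koszul_cons_inl κ hκ i t, countY_cons_inl, wordProd_cons]
      simp only [mul_add, add_mul, smul_add, smul_mul_assoc, mul_smul_comm, smul_smul,
        mul_assoc]
    | inr i =>
      rw [List.cons_append, koszul_cons_inr κ hκ i (t ++ w₂), ih,
        koszul_cons_inr κ hκ i t, countY_cons_inr, countX_append, wordProd_append,
        wordProd_cons]
      simp only [mul_add, add_mul, smul_add, smul_mul_assoc, mul_smul_comm, smul_smul,
        mul_assoc, pow_succ, pow_add]
      module

end OmegaAlg
/-- **q-Leibniz rule for the Koszul differential.** On the quantum Koszul
complex `K` (with product twisted by the braiding), the Koszul differential `κ`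
satisfies: for `a ∈ K^i` of polynomial degree `d₁` and `b ∈ K^j` of polynomial degree
`d₂`, `κ(ab) = q^j κ(a)·b + (−q⁻¹)^{d₁−i} a·κ(b)`. -/
theorem stmt9 (K : Type*) [Field K] (q : K) (hq : q ≠ 0) (n : ℕ)
    (κ : OmegaAlg K q n →ₗ[K] OmegaAlg K q n) (hκ : OmegaAlg.IsKoszul K q n κ)
    (i d₁ j d₂ : ℕ) (hi : i ≤ d₁) (hj : j ≤ d₂)
    (a b : OmegaAlg K q n)
    (ha : a ∈ OmegaAlg.koszulPiece K q n i d₁)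
    (hb : b ∈ OmegaAlg.koszulPiece K q n j d₂) :
    κ (a * b) = q ^ j • (κ a * b) + (-q⁻¹) ^ (d₁ - i) • (a * κ b) := by
  induction ha using Submodule.span_induction with
  | mem a hamem =>
    induction hb using Submodule.span_induction with
    | mem b hbmem =>
      obtain ⟨w₁, hlen1, hcx1, rfl⟩ := hamem
      obtain ⟨w₂, hlen2, hcx2, rfl⟩ := hbmem
      have hy1 : OmegaAlg.countY n w₁ = d₁ - i := by
        have := OmegaAlg.countX_add_countY (n := n) w₁
        omega
      rw [← OmegaAlg.wordProd_append, OmegaAlg.koszul_word_mul κ hκ, hcx2, hy1]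
    | zero => simp
    | add x y hx hy ihx ihy =>
      rw [mul_add, map_add, ihx, ihy, mul_add, map_add, mul_add, smul_add, smul_add]
      abel
    | smul c x hx ihx =>
      rw [mul_smul_comm, map_smul, ihx, map_smul, mul_smul_comm, mul_smul_comm,
        smul_add, smul_comm c, smul_comm c]
  | zero => simp
  | add x y hx hy ihx ihy =>
    rw [add_mul, map_add, ihx, ihy, add_mul, map_add, add_mul, smul_add, smul_add]
    abel
  | smul c x hx ihx =>
    rw [smul_mul_assoc, map_smul, ihx, map_smul, smul_mul_assoc, smul_mul_assoc,
      smul_add, smul_comm c, smul_comm c]
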